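/- Let v be a simplicial vertex of a graph Γ with vertex set V, and Q a positive semidefinite Hermitian matrix indexed by V that is sparse with respect to Γ (Q(u,w) = 0 for non-adjacent u ≠ w) with Q(v,v) ≠ 0. Define M_v by M_v(v₁,v₂) = Q(v₁,v₂) when one of v₁,v₂ equals v and the other is in adj(v) ∪ {v}; M_v(v₁,v₂) = Q(v,v)^{-1} Q(v₁,v) conj(Q(v₂,v)) for v₁,v₂ ∈ adj(v); and 0 otherwise. Then both M_v and Q − M_v are positive semidefinite, and the row and column of Q − M_v indexed by v are zero. -/

import Mathlib

open scoped BigOperators ComplexOrder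
open Matrix

/-- A vertex is simplicial if its neighborhood induces a complete subgraph. -/
def IsSimplicial {V : Type*} (Γ : SimpleGraph V) (v : V) : Prop :=
  ∀ u w : V, Γ.Adj v u → Γ.Adj v w → u ≠ w → Γ.Adj u w

/-- The Schur-complement-type update at a simplicial vertex: both `M_v` and `Q − M_v` are
positive semidefinite, and the row and column of `Q − M_v` indexed by `v` vanish. -/
theorem simplicial_schur_update_posSemidef
    {V : Type*} [Fintype V] [DecidableEq V]
    (Γ : SimpleGraph V) [DecidableRel Γ.Adj]
    (v : V) (hv : IsSimplicial Γ v)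
    (Q : Matrix V V ℂ) (hQ : Q.PosSemidef)
    (hsparse : ∀ u w : V, u ≠ w → ¬Γ.Adj u w → Q u w = 0)
    (hvv : Q v v ≠ 0)
    (M : Matrix V V ℂ)
    (hM : ∀ a b : V,
      M a b =
        if (a = v ∧ (b = v ∨ Γ.Adj v b)) ∨ (b = v ∧ (a = v ∨ Γ.Adj v a)) then Q a b
        else if Γ.Adj v a ∧ Γ.Adj v b then (Q v v)⁻¹ * Q a v * (starRingEnd ℂ) (Q b v)
        else 0) :
    M.PosSemidef ∧ (Q - M).PosSemidef ∧
      ∀ u : V, (Q - M) v u = 0 ∧ (Q - M) u v = 0 := by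
  classical
  have happ : ∀ a b : V, star (Q b a) = Q a b := hQ.1.apply
  have hc1 : (Q v v)⁻¹ * Q v v = 1 := inv_mul_cancel₀ hvv
  have hstarc : star ((Q v v)⁻¹ : ℂ) = (Q v v)⁻¹ := by
    rw [star_inv₀, happ v v]
  -- The rank-one form of M, valid everywhere thanks to sparsity
  have hM' : ∀ a b : V, M a b = (Q v v)⁻¹ * Q a v * star (Q b v) := by
    intro a b
    rw [hM]
    split_ifs with h1 h2
    · rcases h1 with ⟨ha, hb⟩ | ⟨hb, ha⟩
      · rw [ha, hc1, one_mul, happ v b]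
      · rw [hb, happ v v]
        linear_combination (-(Q a v)) * hc1
    · rfl
    · push_neg at h1
      rcases not_and_or.mp h2 with hna | hnb
      · by_cases hav : a = v
        · obtain ⟨hbv, hnb'⟩ := h1.1 hav
          have hz : Q b v = 0 := hsparse b v hbv (fun h => hnb' h.symm)
          rw [hz]; simp
        · have hz : Q a v = 0 := hsparse a v hav (fun h => hna h.symm)
          rw [hz]; ring
      · by_cases hbv : b = v
        · obtain ⟨hav, hna'⟩ := h1.2 hbv
          have hz : Q a v = 0 := hsparse a v hav (fun h => hna' h.symm)
          rw [hz]; ring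
        · have hz : Q b v = 0 := hsparse b v hbv (fun h => hnb h.symm)
          rw [hz]; simp
  -- Q v v is a positive real
  have hvv_nonneg : (0 : ℂ) ≤ Q v v := by
    have h := hQ.dotProduct_mulVec_nonneg (Pi.single v 1)
    have hval : star (Pi.single v (1 : ℂ)) ⬝ᵥ (Q *ᵥ Pi.single v 1) = Q v v := by
      rw [Matrix.mulVec_single]
      simp [dotProduct, Pi.single_apply, apply_ite, Finset.sum_ite_eq']
    rwa [hval] at h
  obtain ⟨hre, him⟩ := Complex.nonneg_iff.mp hvv_nonneg
  have hQvvr : Q v v = ((Q v v).re : ℂ) := by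
    apply Complex.ext
    · simp
    · simp [← him]
  set r : ℝ := (Q v v).re with hr
  have hrpos : 0 < r := by
    rcases lt_or_eq_of_le hre with h | h
    · exact h
    · exact absurd (by rw [hQvvr, ← h]; simp) hvv
  -- Hermitianity of M
  have hMherm : M.IsHermitian := by
    ext a b
    rw [Matrix.conjTranspose_apply, hM' b a, hM' a b]
    simp only [star_mul', star_star, hstarc]
    ring
  -- Quadratic form of M
  have hMx : ∀ x : V → ℂ, M *ᵥ x = fun a => (Q v v)⁻¹ * Q a v * ((Q *ᵥ x) v) := by
    intro x
    funext a
    show ∑ b, M a b * x b = _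
    calc ∑ b, M a b * x b = ∑ b, (Q v v)⁻¹ * Q a v * (Q v b * x b) := by
          refine Finset.sum_congr rfl fun b _ => ?_
          rw [hM' a b, happ v b]; ring
      _ = (Q v v)⁻¹ * Q a v * ∑ b, Q v b * x b := by rw [Finset.mul_sum]
      _ = _ := rfl
  have hsum_star : ∀ x : V → ℂ,
      (∑ a, star (x a) * Q a v) = star ((Q *ᵥ x) v) := by
    intro x
    show _ = star (∑ a, Q v a * x a)
    rw [star_sum]
    refine Finset.sum_congr rfl fun a _ => ?_
    rw [star_mul', happ a v]; ring
  have hMq : ∀ x : V → ℂ, star x ⬝ᵥ (M *ᵥ x)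
      = (Q v v)⁻¹ * (star ((Q *ᵥ x) v) * ((Q *ᵥ x) v)) := by
    intro x
    rw [hMx x]
    show (∑ a, star (x a) * ((Q v v)⁻¹ * Q a v * ((Q *ᵥ x) v))) = _
    calc (∑ a, star (x a) * ((Q v v)⁻¹ * Q a v * ((Q *ᵥ x) v)))
        = (Q v v)⁻¹ * ((∑ a, star (x a) * Q a v) * ((Q *ᵥ x) v)) := by
          rw [Finset.sum_mul, Finset.mul_sum]
          refine Finset.sum_congr rfl fun a _ => by ring
      _ = _ := by rw [hsum_star x]
  have hMq_nonneg : ∀ x : V → ℂ, (0 : ℂ) ≤ star x ⬝ᵥ (M *ᵥ x) := by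
    intro x
    rw [hMq x]
    set u : ℂ := (Q *ᵥ x) v
    have h1 : (star u * u : ℂ) = (Complex.normSq u : ℂ) := by
      rw [Complex.star_def, ← Complex.normSq_eq_conj_mul_self]
    have h2 : ((Q v v)⁻¹ : ℂ) = ((r⁻¹ : ℝ) : ℂ) := by
      rw [hQvvr]; exact (Complex.ofReal_inv r).symm
    rw [h2, h1, ← Complex.ofReal_mul]
    exact Complex.zero_le_real.mpr (mul_nonneg (inv_nonneg.mpr hrpos.le)
      (Complex.normSq_nonneg u))
  have hMpsd : M.PosSemidef := Matrix.PosSemidef.of_dotProduct_mulVec_nonneg hMherm hMq_nonneg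
  -- Quadratic form of Q - M equals quadratic form of Q at a shifted vector
  have hQMq : ∀ x : V → ℂ,
      star x ⬝ᵥ ((Q - M) *ᵥ x)
        = star (x - ((Q v v)⁻¹ * ((Q *ᵥ x) v)) • (Pi.single v 1 : V → ℂ)) ⬝ᵥ
            (Q *ᵥ (x - ((Q v v)⁻¹ * ((Q *ᵥ x) v)) • (Pi.single v 1 : V → ℂ))) := by
    intro x
    set u : ℂ := (Q *ᵥ x) v with hu
    set t : ℂ := (Q v v)⁻¹ * u with ht
    have hse : star (Pi.single v (1 : ℂ)) = (Pi.single v 1 : V → ℂ) := by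
      funext a; simp [Pi.single_apply, apply_ite]
    have hQe : Q *ᵥ Pi.single v (1 : ℂ) = fun a => Q a v := by
      funext a; rw [Matrix.mulVec_single]; simp
    have hxQe : star x ⬝ᵥ (Q *ᵥ Pi.single v (1 : ℂ)) = star u := by
      rw [hQe]
      exact hsum_star x
    have heQx : ∀ w : V → ℂ, (Pi.single v (1 : ℂ)) ⬝ᵥ w = w v := by
      intro w; rw [single_dotProduct, one_mul]
    have hstart : star t = (Q v v)⁻¹ * star u := by
      rw [ht, star_mul', hstarc]
    rw [star_sub, star_smul, hse, Matrix.mulVec_sub, Matrix.mulVec_smul,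
      sub_dotProduct, dotProduct_sub, dotProduct_sub,
      smul_dotProduct, smul_dotProduct, dotProduct_smul,
      dotProduct_smul, hxQe, heQx, heQx, hQe, Matrix.sub_mulVec,
      dotProduct_sub, hMq x, hstart]
    simp only [smul_eq_mul, ← hu]
    linear_combination (-((Q v v)⁻¹ * (star u * u))) * hc1
  have hQMpsd : (Q - M).PosSemidef := by
    refine Matrix.PosSemidef.of_dotProduct_mulVec_nonneg (hQ.1.sub hMherm) fun x => ?_
    rw [hQMq x]
    exact hQ.dotProduct_mulVec_nonneg _
  refine ⟨hMpsd, hQMpsd, fun u => ?_⟩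
  constructor
  · show Q v u - M v u = 0
    rw [hM' v u, hc1, one_mul, happ v u, sub_self]
  · show Q u v - M u v = 0
    rw [hM' u v, happ v v]
    linear_combination (-(Q u v)) * hc1
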